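/- In the graph G of the previous construction (split graph G' with clique A and independent set B, edges inside A deleted, new vertices x,y with y adjacent to x and to all of A): every dominating set of G contains x or y, and if D is a dominating set of G with D \ {x,y} ⊆ A, then D ∩ A is a dominating set of the original split graph G'. -/

import Mathlib

def Dominates {V : Type*} (G : SimpleGraph V) (D : Set V) : Prop :=
  ∀ v, ∃ d ∈ D, d = v ∨ G.Adj d v

def bipOf {V : Type*} (G' : SimpleGraph V) (A : Set V) : SimpleGraph (V ⊕ Bool) where
  Adj a b :=
    match a, b with
    | Sum.inl u, Sum.inl v => G'.Adj u v ∧ ¬ (u ∈ A ∧ v ∈ A)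
    | Sum.inl u, Sum.inr b => b = true ∧ u ∈ A
    | Sum.inr b, Sum.inl u => b = true ∧ u ∈ A
    | Sum.inr b, Sum.inr c => b ≠ c
  symm := by constructor; rintro (u | b) (v | c) h <;> simp_all [SimpleGraph.adj_comm, Ne, eq_comm] <;> tauto
  loopless := by constructor; rintro (u | b) h <;> simp_all

/-- In the modified graph (`x = inr false`, `y = inr true`): every dominating set
contains `x` or `y`; and a dominating set `D` with `D \ {x, y} ⊆ A` intersecting `A`
induces a dominating set `D ∩ A` of the original split graph `G'`. -/
theorem dominating_bip_properties {V : Type*} (G' : SimpleGraph V) (A B : Set V)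
    (hunion : A ∪ B = Set.univ) (hdisj : A ∩ B = ∅) (hA : A.Nonempty)
    (hclique : ∀ a ∈ A, ∀ b ∈ A, a ≠ b → G'.Adj a b)
    (hindep : ∀ a ∈ B, ∀ b ∈ B, ¬ G'.Adj a b) :
    (∀ D : Set (V ⊕ Bool), Dominates (bipOf G' A) D →
      Sum.inr false ∈ D ∨ Sum.inr true ∈ D) ∧
    (∀ D : Set (V ⊕ Bool), Dominates (bipOf G' A) D →
      (∀ v : V, Sum.inl v ∈ D → v ∈ A) → (∃ a ∈ A, Sum.inl a ∈ D) →
      Dominates G' {v | v ∈ A ∧ Sum.inl v ∈ D}) := by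
  constructor
  · intro D hD
    obtain ⟨d, hd, h⟩ := hD (Sum.inr false)
    rcases d with u | b
    · rcases h with h | h
      · exact absurd h (by simp)
      · exact absurd h (by simp [bipOf])
    · rcases h with h | h
      · cases h; exact Or.inl hd
      · have : b = true := by
          rcases b with _ | _
          · exact absurd h (by simp [bipOf])
          · rfl
        subst this; exact Or.inr hd
  · intro D hD hsub ⟨a, haA, haD⟩ v
    by_cases hvA : v ∈ A
    · by_cases hva : a = v
      · exact ⟨v, ⟨hvA, hva ▸ haD⟩, Or.inl rfl⟩
      · exact ⟨a, ⟨haA, haD⟩, Or.inr (hclique a haA v hvA hva)⟩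
    · obtain ⟨d, hd, h⟩ := hD (Sum.inl v)
      rcases d with u | b
      · rcases h with h | h
        · rw [Sum.inl.injEq] at h; exact absurd (hsub v (h ▸ hd)) hvA
        · obtain ⟨hadj, _⟩ := h
          exact ⟨u, ⟨hsub u hd, hd⟩, Or.inr hadj⟩
      · rcases h with h | h
        · exact absurd h (by simp)
        · exact absurd h.2 hvA
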